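/- The operator B_p^G defined by v = -Δ_p^G u on the domain L²(V,ν_G) ∩ L^p(V,ν_G) coincides with the subdifferential ∂J_p^G of the convex functional J_p^G(u) = (1/(2p)) ∑_{x,y} |u(y)-u(x)|^p w_{xy} (set to +∞ outside L²(V,ν_G) ∩ L^p(V,ν_G)). -/

import Mathlib

open Real

section aux
variable {p : ℝ} (hp : 3 ≤ p)
include hp

lemma pt1 : (1:ℝ) ≤ p := by linarith
lemma pt0 : (0:ℝ) < p := by linarith

/-- |s|^(p-2) * |s| = |s|^(p-1) -/
lemma rpow_step (s : ℝ) : |s| ^ (p-2) * |s| = |s| ^ (p-1) := by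
  rcases eq_or_ne s 0 with h | h
  · simp [h, Real.zero_rpow (by linarith : p - 2 ≠ 0), Real.zero_rpow (by linarith : p - 1 ≠ 0)]
  · rw [show p - 1 = (p-2) + 1 by ring, Real.rpow_add_one (abs_ne_zero.2 h)]

/-- |(|s|^(p-2) * s)| = |s|^(p-1) -/
lemma abs_phi (s : ℝ) : abs (|s| ^ (p-2) * s) = |s| ^ (p-1) := by
  rw [abs_mul, abs_of_nonneg (Real.rpow_nonneg (abs_nonneg s) _), rpow_step hp]

/-- s^(p-1) * t ≤ s^p + t^p for nonneg s t -/
lemma young_max {s t : ℝ} (hs : 0 ≤ s) (ht : 0 ≤ t) : s ^ (p-1) * t ≤ s ^ p + t ^ p := by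
  rcases le_total t s with h | h
  · have h1 : s ^ (p-1) * t ≤ s ^ (p-1) * s :=
      mul_le_mul_of_nonneg_left h (Real.rpow_nonneg hs _)
    have h2 : s ^ (p-1) * s = s ^ p := by
      rcases eq_or_ne s 0 with h0 | h0
      · rw [h0, Real.zero_rpow (by linarith : p - 1 ≠ 0),
          Real.zero_rpow (by linarith : p ≠ 0), zero_mul]
      · rw [← Real.rpow_add_one h0, sub_add_cancel]
    nlinarith [Real.rpow_nonneg ht p]
  · have h1 : s ^ (p-1) * t ≤ t ^ (p-1) * t :=
      mul_le_mul_of_nonneg_right (Real.rpow_le_rpow hs h (by linarith)) ht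
    have h2 : t ^ (p-1) * t = t ^ p := by
      rcases eq_or_ne t 0 with h0 | h0
      · rw [h0, Real.zero_rpow (by linarith : p - 1 ≠ 0),
          Real.zero_rpow (by linarith : p ≠ 0), zero_mul]
      · rw [← Real.rpow_add_one h0, sub_add_cancel]
    nlinarith [Real.rpow_nonneg hs p]

/-- |a-b|^p ≤ 2^p (|a|^p + |b|^p) -/
lemma diff_pow_bound (a b : ℝ) : |a - b| ^ p ≤ 2 ^ p * (|a| ^ p + |b| ^ p) := by
  have h1 : |a - b| ≤ 2 * max |a| |b| := by
    have := abs_sub a b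
    rcases le_total |a| |b| with h | h
    · simp [max_eq_right h]; linarith [abs_sub a b]
    · simp [max_eq_left h]; linarith [abs_sub a b]
  have h2 : |a - b| ^ p ≤ (2 * max |a| |b|) ^ p :=
    Real.rpow_le_rpow (abs_nonneg _) h1 (by linarith)
  have h3 : (2 * max |a| |b|) ^ p = 2 ^ p * (max |a| |b|) ^ p :=
    Real.mul_rpow (by norm_num) (le_max_of_le_left (abs_nonneg a))
  have h4 : (max |a| |b|) ^ p ≤ |a| ^ p + |b| ^ p := by
    rcases le_total |a| |b| with h | h
    · rw [max_eq_right h]; nlinarith [Real.rpow_nonneg (abs_nonneg a) p]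
    · rw [max_eq_left h]; nlinarith [Real.rpow_nonneg (abs_nonneg b) p]
  calc |a - b| ^ p ≤ (2 * max |a| |b|) ^ p := h2
    _ = 2 ^ p * (max |a| |b|) ^ p := h3
    _ ≤ 2 ^ p * (|a| ^ p + |b| ^ p) := by
        nlinarith [Real.rpow_nonneg (show (0:ℝ) ≤ 2 by norm_num) p]

/-- tangent line inequality for |·|^p -/
lemma tangent (a b : ℝ) : |a| ^ p + p * (|a| ^ (p-2) * a) * (b - a) ≤ |b| ^ p := by
  rcases eq_or_ne a 0 with ha | ha
  · simp [ha, Real.zero_rpow (by linarith : p - 2 ≠ 0), Real.zero_rpow (by linarith : p ≠ 0),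
      Real.rpow_nonneg (abs_nonneg b) p]
  · set c := |a| ^ (p-2) with hc
    have hcpos : 0 < c := Real.rpow_pos_of_pos (abs_pos.2 ha) _
    have hap : |a| ^ p = c * a ^ 2 := by
      rw [hc, show p = (p-2) + 2 by ring, Real.rpow_add (abs_pos.2 ha)]
      rw [Real.rpow_two, sq_abs]
      ring
    set t := b / a with htdef
    have hat : a * t = b := by rw [htdef]; field_simp
    rcases le_or_gt 0 t with ht | ht
    · have hB : 1 + p * (t - 1) ≤ t ^ p := by
        have h := one_add_mul_self_le_rpow_one_add (by linarith : (-1:ℝ) ≤ t - 1)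
          (by linarith : 1 ≤ p)
        rw [add_sub_cancel] at h
        exact h
      have hb : |b| ^ p = c * a ^ 2 * t ^ p := by
        rw [← hat, abs_mul, Real.mul_rpow (abs_nonneg a) (abs_nonneg t), abs_of_nonneg ht, hap]
      have key : c * a ^ 2 * (1 + p * (t-1)) ≤ c * a ^ 2 * t ^ p :=
        mul_le_mul_of_nonneg_left hB (by positivity)
      have hl : |a| ^ p + p * (c * a) * (b - a) = c * a ^ 2 * (1 + p * (t-1)) := by
        rw [hap, ← hat]; ring
      rw [hl, hb]; exact key
    · have hab : a * b < 0 := by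
        rcases (div_neg_iff.1 ht) with ⟨h1, h2⟩ | ⟨h1, h2⟩
        · exact mul_neg_of_neg_of_pos h2 h1
        · exact mul_neg_of_pos_of_neg h2 h1
      have : |a| ^ p + p * (c * a) * (b - a) ≤ 0 := by
        rw [hap]
        have h1 : c * (a*b) < 0 := mul_neg_of_pos_of_neg hcpos hab
        have h3 : p * (c*(a*b)) < 0 := mul_neg_of_pos_of_neg (by linarith) h1
        have h4 : c * a^2 * (1-p) ≤ 0 :=
          mul_nonpos_of_nonneg_of_nonpos (by positivity) (by linarith)
        nlinarith [h3, h4]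
      exact this.trans (Real.rpow_nonneg (abs_nonneg b) p)

end aux


open Real

set_option linter.unusedSectionVars false

section sums
variable {V : Type*} [Countable V] {w : V → V → ℝ} {d : V → ℝ}
  (hw : ∀ x y, 0 ≤ w x y) (hsymm : ∀ x y, w x y = w y x)
  (hd : ∀ x, d x = ∑' y, w x y) (hdpos : ∀ x, 0 < d x)

include hd hdpos in
lemma summable_w (x : V) : Summable fun y => w x y := by
  by_contra h
  have h0 := tsum_eq_zero_of_not_summable h
  have := hdpos x
  rw [hd x, h0] at this
  exact lt_irrefl _ this

include hw hd hdpos in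
lemma row_summable {f : V → ℝ} (hf : ∀ x, 0 ≤ f x) (hs : Summable fun x => f x * d x) :
    Summable fun q : V × V => f q.1 * w q.1 q.2 := by
  rw [summable_prod_of_nonneg (fun q => mul_nonneg (hf _) (hw _ _))]
  refine ⟨fun x => (summable_w hd hdpos x).mul_left (f x), ?_⟩
  have : (fun x => ∑' y, f x * w x y) = fun x => f x * d x :=
    funext fun x => by rw [tsum_mul_left, ← hd]
  rw [this]; exact hs

include hw hsymm hd hdpos in
lemma col_summable {f : V → ℝ} (hf : ∀ x, 0 ≤ f x) (hs : Summable fun x => f x * d x) :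
    Summable fun q : V × V => f q.2 * w q.1 q.2 := by
  have h := row_summable hw hd hdpos hf hs
  have he : ((fun q : V × V => f q.2 * w q.1 q.2) ∘ (Equiv.prodComm V V)) =
      fun q : V × V => f q.1 * w q.1 q.2 := by
    funext q
    simp only [Function.comp_apply, Equiv.prodComm_apply, Prod.fst_swap, Prod.snd_swap]
    rw [hsymm q.2 q.1]
  exact ((Equiv.prodComm V V).summable_iff).mp (he ▸ h)

variable {p : ℝ} (hp : 3 ≤ p)

include hw hsymm hd hdpos hp in
lemma double_summable {u : V → ℝ} (hup : Summable fun x => |u x| ^ p * d x) :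
    Summable fun q : V × V => |u q.2 - u q.1| ^ p * w q.1 q.2 := by
  have hr := (row_summable hw hd hdpos (f := fun x => |u x| ^ p)
    (fun x => Real.rpow_nonneg (abs_nonneg _) _) hup)
  have hc := (col_summable hw hsymm hd hdpos (f := fun x => |u x| ^ p)
    (fun x => Real.rpow_nonneg (abs_nonneg _) _) hup)
  have hb : Summable fun q : V × V =>
      2 ^ p * ((|u q.1| ^ p) * w q.1 q.2 + (|u q.2| ^ p) * w q.1 q.2) :=
    ((hr.add hc).mul_left _)
  refine Summable.of_nonneg_of_le
    (fun q => mul_nonneg (Real.rpow_nonneg (abs_nonneg _) _) (hw _ _)) (fun q => ?_) hb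
  have := diff_pow_bound hp (u q.2) (u q.1)
  have hwq := hw q.1 q.2
  nlinarith [Real.rpow_nonneg (show (0:ℝ) ≤ 2 by norm_num) p,
    Real.rpow_nonneg (abs_nonneg (u q.1)) p, Real.rpow_nonneg (abs_nonneg (u q.2)) p]

include hw hsymm hd hdpos hp in
lemma cross_summable_fst {u g : V → ℝ} (hup : Summable fun x => |u x| ^ p * d x)
    (hgp : Summable fun x => |g x| ^ p * d x) :
    Summable fun q : V × V => |u q.2 - u q.1| ^ (p-1) * |g q.1| * w q.1 q.2 := by
  have hd2 := double_summable hw hsymm hd hdpos hp hup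
  have hr := (row_summable hw hd hdpos (f := fun x => |g x| ^ p)
    (fun x => Real.rpow_nonneg (abs_nonneg _) _) hgp)
  refine Summable.of_nonneg_of_le
    (fun q => mul_nonneg (mul_nonneg (Real.rpow_nonneg (abs_nonneg _) _) (abs_nonneg _)) (hw _ _))
    (fun q => ?_) (hd2.add hr)
  have hy := young_max hp (abs_nonneg (u q.2 - u q.1)) (abs_nonneg (g q.1))
  have hwq := hw q.1 q.2
  nlinarith

include hw hsymm hd hdpos hp in
lemma cross_summable_snd {u g : V → ℝ} (hup : Summable fun x => |u x| ^ p * d x)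
    (hgp : Summable fun x => |g x| ^ p * d x) :
    Summable fun q : V × V => |u q.2 - u q.1| ^ (p-1) * |g q.2| * w q.1 q.2 := by
  have hd2 := double_summable hw hsymm hd hdpos hp hup
  have hc := (col_summable hw hsymm hd hdpos (f := fun x => |g x| ^ p)
    (fun x => Real.rpow_nonneg (abs_nonneg _) _) hgp)
  refine Summable.of_nonneg_of_le
    (fun q => mul_nonneg (mul_nonneg (Real.rpow_nonneg (abs_nonneg _) _) (abs_nonneg _)) (hw _ _))
    (fun q => ?_) (hd2.add hc)
  have hy := young_max hp (abs_nonneg (u q.2 - u q.1)) (abs_nonneg (g q.2))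
  have hwq := hw q.1 q.2
  nlinarith

/-- L² pairing summability -/
lemma pair_summable {f g : V → ℝ} (hdnn : ∀ x, 0 ≤ d x)
    (hf : Summable fun x => |f x| ^ (2:ℝ) * d x) (hg : Summable fun x => |g x| ^ (2:ℝ) * d x) :
    Summable fun x => f x * g x * d x := by
  refine Summable.of_abs (Summable.of_nonneg_of_le (fun x => abs_nonneg _) (fun x => ?_)
    (((hf.add hg).mul_left (1/2 : ℝ))))
  simp only [Real.rpow_two]
  rw [abs_mul, abs_mul, abs_of_nonneg (hdnn x)]
  have habs : |f x| * |g x| ≤ (|f x| ^ 2 + |g x| ^ 2) / 2 := by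
    nlinarith [sq_nonneg (|f x| - |g x|)]
  have := mul_le_mul_of_nonneg_right habs (hdnn x)
  linarith

/-- membership in L^p of a difference -/
lemma sub_mem_lp {f g : V → ℝ} (hdnn : ∀ x, 0 ≤ d x) (hp' : 3 ≤ p)
    (hf : Summable fun x => |f x| ^ p * d x) (hg : Summable fun x => |g x| ^ p * d x) :
    Summable fun x => |f x - g x| ^ p * d x := by
  refine Summable.of_nonneg_of_le
    (fun x => mul_nonneg (Real.rpow_nonneg (abs_nonneg _) _) (hdnn x)) (fun x => ?_)
    (((hf.add hg).mul_left (2 ^ p)))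
  have := diff_pow_bound hp' (f x) (g x)
  have := hdnn x
  nlinarith [Real.rpow_nonneg (show (0:ℝ) ≤ 2 by norm_num) p]

end sums
section forward
variable {V : Type*} [Countable V] {w : V → V → ℝ} {d : V → ℝ}
  (hw : ∀ x y, 0 ≤ w x y) (hsymm : ∀ x y, w x y = w y x)
  (hd : ∀ x, d x = ∑' y, w x y) (hdpos : ∀ x, 0 < d x)
  {p : ℝ} (hp : 3 ≤ p)

include hw hsymm hd hdpos hp in
lemma forward_core {u v ww : V → ℝ}
    (hv2 : Summable fun x => |v x| ^ (2:ℝ) * d x)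
    (hup : Summable fun x => |u x| ^ p * d x)
    (hptw : ∀ x, v x = -((1 / d x) * ∑' y, |u y - u x| ^ (p - 2) * (u y - u x) * w x y))
    (hu2 : Summable fun x => |u x| ^ (2:ℝ) * d x)
    (hw2 : Summable fun x => |ww x| ^ (2:ℝ) * d x)
    (hwp : Summable fun x => |ww x| ^ p * d x) :
    ((1 / (2 * p)) * ∑' q : V × V, |ww q.2 - ww q.1| ^ p * w q.1 q.2) -
      ((1 / (2 * p)) * ∑' q : V × V, |u q.2 - u q.1| ^ p * w q.1 q.2) ≥
      ∑' x, v x * (ww x - u x) * d x := by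
  have hdnn : ∀ x, 0 ≤ d x := fun x => (hdpos x).le
  set g : V → ℝ := fun x => ww x - u x with hgdef
  -- L^p and L² membership of g
  have hgp : Summable fun x => |g x| ^ p * d x := sub_mem_lp hdnn hp hwp hup
  have hg2 : Summable fun x => |g x| ^ (2:ℝ) * d x := by
    refine Summable.of_nonneg_of_le
      (fun x => mul_nonneg (Real.rpow_nonneg (abs_nonneg _) _) (hdnn x)) (fun x => ?_)
      ((hw2.add hu2).mul_left 2)
    simp only [Real.rpow_two]
    have h1 : |g x| ≤ |ww x| + |u x| := abs_sub _ _
    have habs : |g x| ^ 2 ≤ 2 * (|ww x| ^ 2 + |u x| ^ 2) := by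
      nlinarith [sq_nonneg (|ww x| - |u x|), abs_nonneg (g x), abs_nonneg (ww x),
        abs_nonneg (u x)]
    have := mul_le_mul_of_nonneg_right habs (hdnn x)
    linarith
  -- pairing summable
  have hpair : Summable fun x => v x * g x * d x := pair_summable hdnn hv2 hg2
  -- the two cross families
  set A1 : V × V → ℝ :=
    fun q => (|u q.2 - u q.1| ^ (p-2) * (u q.2 - u q.1)) * g q.1 * w q.1 q.2 with hA1def
  set A2 : V × V → ℝ :=
    fun q => (|u q.2 - u q.1| ^ (p-2) * (u q.2 - u q.1)) * g q.2 * w q.1 q.2 with hA2def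
  have hA1abs : ∀ q : V × V, |A1 q| = |u q.2 - u q.1| ^ (p-1) * |g q.1| * w q.1 q.2 := by
    intro q
    rw [hA1def, abs_mul, abs_mul, abs_of_nonneg (hw _ _), abs_phi hp]
  have hA2abs : ∀ q : V × V, |A2 q| = |u q.2 - u q.1| ^ (p-1) * |g q.2| * w q.1 q.2 := by
    intro q
    rw [hA2def, abs_mul, abs_mul, abs_of_nonneg (hw _ _), abs_phi hp]
  have hA1 : Summable A1 := by
    refine Summable.of_abs ?_
    have := cross_summable_fst hw hsymm hd hdpos hp hup hgp
    simpa only [← hA1abs] using this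
  have hA2 : Summable A2 := by
    refine Summable.of_abs ?_
    have := cross_summable_snd hw hsymm hd hdpos hp hup hgp
    simpa only [← hA2abs] using this
  -- swap identity
  have hswap : ∑' q, A2 q = -∑' q, A1 q := by
    rw [← (Equiv.prodComm V V).tsum_eq A2, ← tsum_neg]
    congr 1
    funext q
    simp only [hA1def, hA2def, Equiv.prodComm_apply, Prod.fst_swap, Prod.snd_swap]
    rw [hsymm q.2 q.1, show u q.1 - u q.2 = -(u q.2 - u q.1) by ring, abs_neg]
    ring
  -- A1 sums to -(pairing)
  have hA1sum : ∑' q, A1 q = -∑' x, v x * g x * d x := by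
    rw [Summable.tsum_prod' hA1 (fun b => hA1.prod_factor b)]
    rw [← tsum_neg]
    congr 1
    funext x
    have hrow : ∑' y, A1 (x, y) =
        g x * ∑' y, |u y - u x| ^ (p-2) * (u y - u x) * w x y := by
      rw [← tsum_mul_left]
      congr 1
      funext y
      simp only [hA1def]
      ring
    have hS : (∑' y, |u y - u x| ^ (p-2) * (u y - u x) * w x y) = -(v x * d x) := by
      have h := hptw x
      have hd0 : d x ≠ 0 := (hdpos x).ne'
      field_simp at h
      have e : (∑' y, (u y - u x) * |u y - u x| ^ (p - 2) * w x y) =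
          ∑' y, |u y - u x| ^ (p-2) * (u y - u x) * w x y := by
        congr 1; funext y; ring
      linarith
    rw [hrow, hS]
    ring
  -- tangent inequality summed
  have hDu := double_summable hw hsymm hd hdpos hp hup
  have hDww := double_summable hw hsymm hd hdpos hp hwp
  have hA : Summable (fun q => A2 q - A1 q) := hA2.sub hA1
  have hle : ∑' q : V × V, (|u q.2 - u q.1| ^ p * w q.1 q.2 + p * (A2 q - A1 q)) ≤
      ∑' q : V × V, |ww q.2 - ww q.1| ^ p * w q.1 q.2 := by
    refine Summable.tsum_le_tsum (fun q => ?_) (hDu.add (hA.mul_left p)) hDww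
    have ht := tangent hp (u q.2 - u q.1) (ww q.2 - ww q.1)
    have hwq := hw q.1 q.2
    have harg : ww q.2 - ww q.1 - (u q.2 - u q.1) = g q.2 - g q.1 := by
      simp only [hgdef]; ring
    have key : (|u q.2 - u q.1| ^ p +
        p * (|u q.2 - u q.1| ^ (p-2) * (u q.2 - u q.1)) * (g q.2 - g q.1)) * w q.1 q.2 ≤
        |ww q.2 - ww q.1| ^ p * w q.1 q.2 := by
      refine mul_le_mul_of_nonneg_right ?_ hwq
      calc |u q.2 - u q.1| ^ p +
          p * (|u q.2 - u q.1| ^ (p-2) * (u q.2 - u q.1)) * (g q.2 - g q.1) =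
          |u q.2 - u q.1| ^ p + p * (|u q.2 - u q.1| ^ (p-2) * (u q.2 - u q.1)) *
            (ww q.2 - ww q.1 - (u q.2 - u q.1)) := by rw [harg]
        _ ≤ |ww q.2 - ww q.1| ^ p := ht
    calc |u q.2 - u q.1| ^ p * w q.1 q.2 + p * (A2 q - A1 q) =
        (|u q.2 - u q.1| ^ p +
          p * (|u q.2 - u q.1| ^ (p-2) * (u q.2 - u q.1)) * (g q.2 - g q.1)) * w q.1 q.2 := by
          simp only [hA1def, hA2def]; ring
      _ ≤ |ww q.2 - ww q.1| ^ p * w q.1 q.2 := key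
  rw [Summable.tsum_add hDu (hA.mul_left p), tsum_mul_left, Summable.tsum_sub hA2 hA1, hswap, hA1sum] at hle
  -- conclude
  have hppos : (0:ℝ) < p := by linarith
  have h2p : (0:ℝ) < 1 / (2 * p) := by positivity
  set P := ∑' x, v x * g x * d x
  set Tu := ∑' q : V × V, |u q.2 - u q.1| ^ p * w q.1 q.2
  set Tw := ∑' q : V × V, |ww q.2 - ww q.1| ^ p * w q.1 q.2
  have : Tu + p * (2 * P) ≤ Tw := by
    have : -(-P) - -P = 2 * P := by ring
    calc Tu + p * (2 * P) = Tu + p * (-(-P) - -P) := by rw [this]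
      _ ≤ Tw := hle
  have hgoal : 1 / (2 * p) * Tw - 1 / (2 * p) * Tu ≥ P := by
    rw [ge_iff_le, ← sub_nonneg]
    have hexp : 1 / (2 * p) * Tw - 1 / (2 * p) * Tu - P =
        (1 / (2 * p)) * (Tw - (Tu + p * (2 * P))) := by field_simp; ring
    rw [hexp]
    exact mul_nonneg h2p.le (by linarith)
  exact hgoal

end forward
section backward
variable {V : Type*} [Countable V] {w : V → V → ℝ} {d : V → ℝ}
  (hw : ∀ x y, 0 ≤ w x y) (hsymm : ∀ x y, w x y = w y x)
  (hd : ∀ x, d x = ∑' y, w x y) (hdpos : ∀ x, 0 < d x)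
  {p : ℝ} (hp : 3 ≤ p)

lemma summable_perturb {f g : V → ℝ} (hf : Summable f) (z : V)
    (h : ∀ x, x ≠ z → g x = f x) : Summable g := by
  classical
  have hdiff : Summable (fun x => g x - f x) := by
    refine summable_of_ne_finset_zero (s := ({z} : Finset V)) (fun x hx => ?_)
    rw [h x (by simpa using hx)]; ring
  exact (hf.add hdiff).congr (fun x => by ring)

include hw hsymm hd hdpos hp in
lemma backward_core {u v : V → ℝ}
    (hu2 : Summable fun x => |u x| ^ (2:ℝ) * d x)
    (hup : Summable fun x => |u x| ^ p * d x)
    (H : ∀ ww : V → ℝ, (Summable fun x => |ww x| ^ (2:ℝ) * d x) →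
      (Summable fun x => |ww x| ^ p * d x) →
      ((1 / (2 * p)) * ∑' q : V × V, |ww q.2 - ww q.1| ^ p * w q.1 q.2) -
        ((1 / (2 * p)) * ∑' q : V × V, |u q.2 - u q.1| ^ p * w q.1 q.2) ≥
        ∑' x, v x * (ww x - u x) * d x)
    (z : V) :
    v z = -((1 / d z) * ∑' y, |u y - u z| ^ (p - 2) * (u y - u z) * w z y) := by
  classical
  have hp1 : (1:ℝ) < p := by linarith
  have hdnn : ∀ x, 0 ≤ d x := fun x => (hdpos x).le
  set δ : V → ℝ := fun x => if x = z then (1:ℝ) else 0 with hδdef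
  have hδnn : ∀ x, 0 ≤ δ x := fun x => by by_cases h : x = z <;> simp [hδdef, h]
  have hδle : ∀ x, δ x ≤ 1 := fun x => by by_cases h : x = z <;> simp [hδdef, h]
  have hδz : δ z = 1 := by simp [hδdef]
  have hδoff : ∀ x, x ≠ z → δ x = 0 := fun x hx => by simp [hδdef, hx]
  -- δ is in L² and L^p
  have hδd : Summable fun x => δ x * d x := by
    refine summable_of_ne_finset_zero (s := ({z} : Finset V)) (fun x hx => ?_)
    rw [hδoff x (by simpa using hx)]; ring
  have hδp : Summable fun x => |δ x| ^ p * d x := by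
    refine summable_of_ne_finset_zero (s := ({z} : Finset V)) (fun x hx => ?_)
    rw [hδoff x (by simpa using hx)]
    simp [Real.zero_rpow (by linarith : p ≠ 0)]
  -- perturbed functions are in L² and L^p
  have hwwt2 : ∀ t : ℝ, Summable fun x => |u x + t * δ x| ^ (2:ℝ) * d x := by
    intro t
    refine summable_perturb hu2 z (fun x hx => ?_)
    rw [hδoff x hx]; ring_nf
  have hwwtp : ∀ t : ℝ, Summable fun x => |u x + t * δ x| ^ p * d x := by
    intro t
    refine summable_perturb hup z (fun x hx => ?_)
    rw [hδoff x hx]; ring_nf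
  -- the function ε on pairs
  set ε : V × V → ℝ := fun q => δ q.2 - δ q.1 with hεdef
  have hεabs : ∀ q, |ε q| ≤ δ q.1 + δ q.2 := by
    intro q
    rw [hεdef]
    rw [abs_le]
    constructor <;> [skip; skip] <;> simp only [] <;>
      [linarith [hδnn q.1, hδnn q.2]; linarith [hδnn q.1, hδnn q.2]]
  have hεle1 : ∀ q, |ε q| ≤ 1 := by
    intro q
    rw [hεdef, abs_le]
    constructor <;> simp only [] <;>
      [linarith [hδnn q.2, hδle q.1]; linarith [hδnn q.1, hδle q.2]]
  -- the series and its derivative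
  set G : V × V → ℝ → ℝ := fun q t => |u q.2 - u q.1 + t * ε q| ^ p * w q.1 q.2 with hGdef
  set G' : V × V → ℝ → ℝ := fun q t =>
    p * (|u q.2 - u q.1 + t * ε q| ^ (p-2) * (u q.2 - u q.1 + t * ε q)) * ε q * w q.1 q.2
    with hG'def
  have hGderiv : ∀ q : V × V, ∀ t : ℝ, HasDerivAt (G q) (G' q t) t := by
    intro q t
    have h1 : HasDerivAt (fun s : ℝ => u q.2 - u q.1 + s * ε q) (ε q) t := by
      simpa using (((hasDerivAt_id t).mul_const (ε q)).const_add (u q.2 - u q.1))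
    have h2 := hasDerivAt_abs_rpow (u q.2 - u q.1 + t * ε q) hp1
    have h3 := (h2.comp t h1).mul_const (w q.1 q.2)
    have e : G' q t = p * |u q.2 - u q.1 + t * ε q| ^ (p - 2) * (u q.2 - u q.1 + t * ε q) * ε q * w q.1 q.2 := by
      simp only [hG'def]; ring
    rw [e]; exact h3
  -- the summable bound on the unit ball
  have hDu := double_summable hw hsymm hd hdpos hp hup
  set B : V × V → ℝ := fun q => p * 2 ^ p * (|u q.2 - u q.1| ^ p * w q.1 q.2) +
    p * (2 ^ p + 1) * (δ q.1 * w q.1 q.2 + δ q.2 * w q.1 q.2) with hBdef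
  have hB : Summable B := by
    refine Summable.add (hDu.mul_left _) (Summable.mul_left _ ?_)
    exact (row_summable hw hd hdpos hδnn hδd).add (col_summable hw hsymm hd hdpos hδnn hδd)
  have hbound : ∀ q : V × V, ∀ t ∈ Metric.ball (0:ℝ) 1, ‖G' q t‖ ≤ B q := by
    intro q t ht
    have htabs : |t| < 1 := by simpa [Real.norm_eq_abs] using ht
    set s := u q.2 - u q.1 + t * ε q with hsdef
    have hnorm : ‖G' q t‖ = p * |s| ^ (p-1) * |ε q| * w q.1 q.2 := by
      rw [Real.norm_eq_abs, hG'def]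
      rw [abs_mul, abs_mul, abs_mul, abs_phi hp, abs_of_nonneg (hw q.1 q.2),
        abs_of_nonneg (by linarith : (0:ℝ) ≤ p)]
    have hsabs : |s| ≤ |u q.2 - u q.1| + 1 := by
      rw [hsdef]
      calc |u q.2 - u q.1 + t * ε q| ≤ |u q.2 - u q.1| + |t * ε q| := abs_add_le _ _
        _ ≤ |u q.2 - u q.1| + 1 := by
            have := hεle1 q
            have := abs_nonneg t
            rw [abs_mul]
            nlinarith
    have hs1 : |s| ^ (p-1) ≤ 2 ^ p * (|u q.2 - u q.1| ^ p + 1) + 1 := by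
      have h1 : |s| ^ (p-1) ≤ (|u q.2 - u q.1| + 1) ^ (p-1) :=
        Real.rpow_le_rpow (abs_nonneg s) hsabs (by linarith)
      have h2 : (|u q.2 - u q.1| + 1) ^ (p-1) * 1 ≤ (|u q.2 - u q.1| + 1) ^ p + 1 ^ p := by
        refine young_max hp (by positivity) (by norm_num)
      rw [mul_one, Real.one_rpow] at h2
      have h3 : (|u q.2 - u q.1| + 1) ^ p ≤ 2 ^ p * (|u q.2 - u q.1| ^ p + 1) := by
        have h4 := diff_pow_bound hp (|u q.2 - u q.1|) (-1)
        rw [abs_abs, abs_neg, abs_one, Real.one_rpow, sub_neg_eq_add] at h4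
        rwa [abs_of_nonneg (by positivity : (0:ℝ) ≤ |u q.2 - u q.1| + 1)] at h4
      linarith
    rw [hnorm, hBdef]
    have hwq := hw q.1 q.2
    have hεa := hεabs q
    have hε1 := hεle1 q
    have hεnn := abs_nonneg (ε q)
    have hDnn : (0:ℝ) ≤ |u q.2 - u q.1| ^ p := Real.rpow_nonneg (abs_nonneg _) _
    have h2p : (0:ℝ) < 2 ^ p := Real.rpow_pos_of_pos (by norm_num) _
    have hsnn : (0:ℝ) ≤ |s| ^ (p-1) := Real.rpow_nonneg (abs_nonneg _) _
    -- p * |s|^(p-1) * |ε| * w ≤ p*2^p*(|Δu|^p*w) + p*(2^p+1)*(δ₁w + δ₂w)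
    have key : |s| ^ (p-1) * |ε q| ≤ 2 ^ p * |u q.2 - u q.1| ^ p + (2 ^ p + 1) * (δ q.1 + δ q.2) := by
      calc |s| ^ (p-1) * |ε q| ≤ (2 ^ p * (|u q.2 - u q.1| ^ p + 1) + 1) * |ε q| :=
            mul_le_mul_of_nonneg_right hs1 hεnn
        _ = 2 ^ p * |u q.2 - u q.1| ^ p * |ε q| + (2 ^ p + 1) * |ε q| := by ring
        _ ≤ 2 ^ p * |u q.2 - u q.1| ^ p + (2 ^ p + 1) * (δ q.1 + δ q.2) := by
            have h6 : 2 ^ p * |u q.2 - u q.1| ^ p * |ε q| ≤ 2 ^ p * |u q.2 - u q.1| ^ p := by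
              have := mul_le_mul_of_nonneg_left hε1 (mul_nonneg h2p.le hDnn)
              simpa [mul_assoc] using this
            have h7 : (2 ^ p + 1) * |ε q| ≤ (2 ^ p + 1) * (δ q.1 + δ q.2) :=
              mul_le_mul_of_nonneg_left hεa (by positivity)
            linarith
    calc p * |s| ^ (p-1) * |ε q| * w q.1 q.2 = p * ((|s| ^ (p-1) * |ε q|) * w q.1 q.2) := by ring
      _ ≤ p * ((2 ^ p * |u q.2 - u q.1| ^ p + (2 ^ p + 1) * (δ q.1 + δ q.2)) * w q.1 q.2) := by
          refine mul_le_mul_of_nonneg_left (mul_le_mul_of_nonneg_right key hwq) (by linarith)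
      _ = p * 2 ^ p * (|u q.2 - u q.1| ^ p * w q.1 q.2) +
          p * (2 ^ p + 1) * (δ q.1 * w q.1 q.2 + δ q.2 * w q.1 q.2) := by ring
  -- G at 0 is summable
  have hG0 : Summable fun q => G q 0 := by
    refine hDu.congr (fun q => ?_)
    rw [hGdef]
    norm_num
  -- derivative of the series at 0
  have hseries : HasDerivAt (fun t => ∑' q, G q t) (∑' q, G' q 0) 0 := by
    refine hasDerivAt_tsum_of_isPreconnected hB Metric.isOpen_ball
      (convex_ball (0:ℝ) 1).isPreconnected
      (fun q y _ => hGderiv q y) (fun q y hy => hbound q y hy) ?_ hG0 ?_ <;>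
    simp [Metric.mem_ball]
  -- evaluate the derivative sum
  set S := ∑' y, |u y - u z| ^ (p - 2) * (u y - u z) * w z y with hSdef
  have hA1 : Summable (fun q : V × V =>
      (|u q.2 - u q.1| ^ (p-2) * (u q.2 - u q.1)) * δ q.1 * w q.1 q.2) := by
    refine Summable.of_abs ?_
    have := cross_summable_fst hw hsymm hd hdpos hp hup hδp
    refine this.congr (fun q => ?_)
    rw [abs_mul, abs_mul, abs_of_nonneg (hw _ _), abs_phi hp]
  have hA2 : Summable (fun q : V × V =>
      (|u q.2 - u q.1| ^ (p-2) * (u q.2 - u q.1)) * δ q.2 * w q.1 q.2) := by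
    refine Summable.of_abs ?_
    have := cross_summable_snd hw hsymm hd hdpos hp hup hδp
    refine this.congr (fun q => ?_)
    rw [abs_mul, abs_mul, abs_of_nonneg (hw _ _), abs_phi hp]
  have hswap : (∑' q : V × V, (|u q.2 - u q.1| ^ (p-2) * (u q.2 - u q.1)) * δ q.2 * w q.1 q.2)
      = -∑' q : V × V, (|u q.2 - u q.1| ^ (p-2) * (u q.2 - u q.1)) * δ q.1 * w q.1 q.2 := by
    rw [← (Equiv.prodComm V V).tsum_eq
      (fun q : V × V => (|u q.2 - u q.1| ^ (p-2) * (u q.2 - u q.1)) * δ q.2 * w q.1 q.2),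
      ← tsum_neg]
    congr 1
    funext q
    simp only [Equiv.prodComm_apply, Prod.fst_swap, Prod.snd_swap]
    rw [hsymm q.2 q.1, show u q.1 - u q.2 = -(u q.2 - u q.1) by ring, abs_neg]
    ring
  have hA1sum : (∑' q : V × V, (|u q.2 - u q.1| ^ (p-2) * (u q.2 - u q.1)) * δ q.1 * w q.1 q.2)
      = S := by
    rw [Summable.tsum_prod' hA1 (fun b => hA1.prod_factor b)]
    have hrow : ∀ x, (∑' y, (|u y - u x| ^ (p-2) * (u y - u x)) * δ x * w x y) =
        δ x * ∑' y, |u y - u x| ^ (p-2) * (u y - u x) * w x y := by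
      intro x
      rw [← tsum_mul_left]
      congr 1
      funext y
      ring
    calc (∑' x, ∑' y, (|u y - u x| ^ (p-2) * (u y - u x)) * δ x * w x y)
        = ∑' x, δ x * ∑' y, |u y - u x| ^ (p-2) * (u y - u x) * w x y := by
          congr 1; funext x; exact hrow x
      _ = δ z * ∑' y, |u y - u z| ^ (p-2) * (u y - u z) * w z y := by
          refine tsum_eq_single z (fun x hx => ?_)
          rw [hδoff x hx, zero_mul]
      _ = S := by rw [hδz, one_mul, hSdef]
  have hDsum : (∑' q, G' q 0) = -(2 * p * S) := by
    have hG'0 : ∀ q : V × V, G' q 0 =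
        p * ((|u q.2 - u q.1| ^ (p-2) * (u q.2 - u q.1)) * δ q.2 * w q.1 q.2) -
        p * ((|u q.2 - u q.1| ^ (p-2) * (u q.2 - u q.1)) * δ q.1 * w q.1 q.2) := by
      intro q
      rw [hG'def, hεdef]
      norm_num
      ring
    calc (∑' q, G' q 0) = ∑' q : V × V,
        (p * ((|u q.2 - u q.1| ^ (p-2) * (u q.2 - u q.1)) * δ q.2 * w q.1 q.2) -
         p * ((|u q.2 - u q.1| ^ (p-2) * (u q.2 - u q.1)) * δ q.1 * w q.1 q.2)) := by
          congr 1; funext q; exact hG'0 q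
      _ = p * (∑' q : V × V, (|u q.2 - u q.1| ^ (p-2) * (u q.2 - u q.1)) * δ q.2 * w q.1 q.2) -
          p * (∑' q : V × V, (|u q.2 - u q.1| ^ (p-2) * (u q.2 - u q.1)) * δ q.1 * w q.1 q.2) := by
          rw [Summable.tsum_sub (hA2.mul_left p) (hA1.mul_left p), tsum_mul_left, tsum_mul_left]
      _ = -(2 * p * S) := by rw [hswap, hA1sum]; ring
  -- the global minimum function
  set f : ℝ → ℝ := fun t => (1 / (2 * p)) * (∑' q, G q t) - t * (v z * d z) with hfdef
  have hmin : ∀ t, f 0 ≤ f t := by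
    intro t
    have hH := H (fun x => u x + t * δ x) (hwwt2 t) (hwwtp t)
    have e1 : (∑' q : V × V, |(u q.2 + t * δ q.2) - (u q.1 + t * δ q.1)| ^ p * w q.1 q.2) =
        ∑' q, G q t := by
      congr 1; funext q; rw [hGdef]
      congr 2
      rw [hεdef]; ring
    have e2 : (∑' x, v x * ((u x + t * δ x) - u x) * d x) = t * (v z * d z) := by
      have : ∀ x, x ≠ z → v x * ((u x + t * δ x) - u x) * d x = 0 := by
        intro x hx
        rw [hδoff x hx]; ring
      rw [tsum_eq_single z this, hδz]; ring
    rw [e1, e2] at hH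
    have e3 : (∑' q : V × V, |u q.2 - u q.1| ^ p * w q.1 q.2) = ∑' q, G q 0 := by
      congr 1; funext q; rw [hGdef]; norm_num
    rw [e3] at hH
    rw [hfdef]
    simp only []
    linarith
  have hlocal : IsLocalMin f 0 := Filter.Eventually.of_forall hmin
  have hfderiv : HasDerivAt f ((1 / (2 * p)) * (∑' q, G' q 0) - v z * d z) 0 := by
    refine HasDerivAt.sub (hseries.const_mul _) ?_
    simpa using (hasDerivAt_id (0:ℝ)).mul_const (v z * d z)
  have hzero := hlocal.hasDerivAt_eq_zero hfderiv
  rw [hDsum] at hzero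
  have hppos : (0:ℝ) < p := by linarith
  have hvzd : v z * d z = -S := by
    have h2p : (2 * p) ≠ 0 := by positivity
    field_simp at hzero
    have h8 : 2 * p * (v z * d z) = 2 * p * (-S) := by rw [show v z * d z = -S by linarith]
    exact mul_left_cancel₀ h2p h8
  have hd0 : d z ≠ 0 := (hdpos z).ne'
  rw [hSdef] at hvzd
  field_simp
  linarith [hvzd]

end backward
/-- The operator B_p^G (i.e. v = -Δ_p^G u on L² ∩ L^p) coincides with the
subdifferential of J_p^G in L²(V,ν_G). -/
theorem stmt3 {V : Type*} [Countable V] (w : V → V → ℝ) (d : V → ℝ)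
    (hw : ∀ x y, 0 ≤ w x y) (hsymm : ∀ x y, w x y = w y x)
    (hd : ∀ x, d x = ∑' y, w x y) (hdpos : ∀ x, 0 < d x)
    (p : ℝ) (hp : 3 ≤ p)
    (J : (V → ℝ) → ℝ)
    (hJ : ∀ u : V → ℝ, J u = (1 / (2 * p)) * ∑' q : V × V, |u q.2 - u q.1| ^ p * w q.1 q.2)
    (u v : V → ℝ)
    (hu2 : Summable fun x => |u x| ^ (2 : ℝ) * d x)
    (hv2 : Summable fun x => |v x| ^ (2 : ℝ) * d x) :
    ((Summable fun x => |u x| ^ p * d x) ∧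
        ∀ x, v x = -((1 / d x) * ∑' y, |u y - u x| ^ (p - 2) * (u y - u x) * w x y)) ↔
      ((Summable fun x => |u x| ^ p * d x) ∧
        ∀ ww : V → ℝ, (Summable fun x => |ww x| ^ (2 : ℝ) * d x) →
          (Summable fun x => |ww x| ^ p * d x) →
            J ww - J u ≥ ∑' x, v x * (ww x - u x) * d x) := by
  constructor
  · rintro ⟨hup, hptw⟩
    refine ⟨hup, fun ww hww2 hwwp => ?_⟩
    have hcore := forward_core hw hsymm hd hdpos hp hv2 hup hptw hu2 hww2 hwwp
    rw [hJ ww, hJ u]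
    exact hcore
  · rintro ⟨hup, H⟩
    refine ⟨hup, fun z => ?_⟩
    refine backward_core hw hsymm hd hdpos hp hu2 hup (fun ww h2 hpp => ?_) z
    have hcore := H ww h2 hpp
    rw [hJ ww, hJ u] at hcore
    exact hcore
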